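/- Let k be a field, n ≥ 1, and let J be a left ideal of the matrix ring M_n(k) with J ≠ M_n(k). Then every left module M over M_n(k) is J-vanishingly generated: the M_n(k)-span of the subset {m ∈ M | K•m = 0 for all K ∈ J} is all of M. -/

import Mathlib

/-- If `J` is a proper left ideal of `M_n(k)`, there is a nonzero vector killed by all of `J`. -/
theorem exists_vec_of_ne_top {k : Type*} [Field k] {n : ℕ}
    (J : Submodule (Matrix (Fin n) (Fin n) k) (Matrix (Fin n) (Fin n) k))
    (hJ : J ≠ ⊤) :
    ∃ w : Fin n → k, w ≠ 0 ∧ ∀ K ∈ J, K.mulVec w = 0 := by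
  classical
  -- span of rows of elements of J
  set W : Submodule k (Fin n → k) :=
    Submodule.span k {r | ∃ K ∈ J, ∃ a, r = K a} with hWdef
  have hW : W ≠ ⊤ := by
    intro hWtop
    apply hJ
    -- single-row matrices with given row in position b
    have hsingle : ∀ (b : Fin n) (r : Fin n → k), Matrix.of (Pi.single b r) ∈ J := by
      intro b
      let S : Submodule k (Fin n → k) :=
        { carrier := {r | Matrix.of (Pi.single b r) ∈ J}
          add_mem' := by
            intro r s hr hs
            have : Matrix.of (Pi.single b (r + s))
                = Matrix.of (Pi.single b r) + Matrix.of (Pi.single b s) := by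
              rw [Pi.single_add]; rfl
            rw [Set.mem_setOf_eq, this]
            exact J.add_mem hr hs
          zero_mem' := by
            have : Matrix.of (Pi.single b (0 : Fin n → k)) = 0 := by
              ext i j; simp
            simpa [this] using J.zero_mem
          smul_mem' := by
            intro c r hr
            have h2 : ((c • (1 : Matrix (Fin n) (Fin n) k)) • Matrix.of (Pi.single b r)) ∈ J :=
              J.smul_mem _ hr
            have h3 : ((c • (1 : Matrix (Fin n) (Fin n) k)) • Matrix.of (Pi.single b r))
                = Matrix.of (Pi.single b (c • r)) := by
              rw [smul_eq_mul, smul_mul_assoc, one_mul]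
              ext i j
              simp [Pi.single_apply]
              split <;> simp
            rwa [h3] at h2 }
      intro r
      have hle : W ≤ S := by
        rw [hWdef]
        apply Submodule.span_le.2
        rintro r ⟨K, hK, a, rfl⟩
        have h1 : (Matrix.single b a (1:k)) • K ∈ J := J.smul_mem _ hK
        have h2 : (Matrix.single b a (1:k)) • K = Matrix.of (Pi.single b (K a)) := by
          rw [smul_eq_mul]
          ext i j
          rw [Matrix.mul_apply]
          by_cases h : i = b
          · subst h
            simp [Matrix.single, Pi.single_apply, ite_and,
              Finset.sum_ite_eq, Finset.sum_ite_eq']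
          · simp [Matrix.single, Pi.single_apply, h, Ne.symm h, ite_and]
        show Matrix.of (Pi.single b (K a)) ∈ J
        rw [← h2]; exact h1
      exact hle (hWtop ▸ Submodule.mem_top)
    -- `1 = ∑ b, singleRow b (e_b)`
    have h1 : (1 : Matrix (Fin n) (Fin n) k)
        = ∑ b : Fin n, Matrix.of (Pi.single b (Pi.single b (1:k))) := by
      ext i j
      rw [Matrix.sum_apply]
      simp [Pi.single_apply, Matrix.one_apply, ite_apply, Finset.sum_ite_eq, eq_comm]
    have h1J : (1 : Matrix (Fin n) (Fin n) k) ∈ J := by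
      rw [h1]; exact Submodule.sum_mem _ fun b _ => hsingle b _
    rw [Submodule.eq_top_iff']
    intro x
    simpa [smul_eq_mul] using J.smul_mem x h1J
  -- get a dual functional vanishing on W
  obtain ⟨f, hf0, hfW⟩ := W.exists_dual_map_eq_bot_of_lt_top (lt_top_iff_ne_top.2 hW)
    inferInstance
  refine ⟨fun j => f (fun l => if j = l then 1 else 0), ?_, ?_⟩
  · intro hzero
    apply hf0
    refine LinearMap.ext fun x => ?_
    have hx : f x = ∑ j, x j • f (fun l => if j = l then 1 else 0) :=
      LinearMap.pi_apply_eq_sum_univ f x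
    have h0 : ∀ j, f (fun l : Fin n => if j = l then (1:k) else 0) = 0 :=
      fun j => congrFun hzero j
    simp [hx, h0]
  · intro K hK
    ext a
    have hrow : (K a : Fin n → k) ∈ W :=
      Submodule.subset_span ⟨K, hK, a, rfl⟩
    have hfr : f (K a) = 0 := by
      have : f (K a) ∈ W.map f := Submodule.mem_map_of_mem hrow
      rw [hfW] at this
      exact (Submodule.mem_bot k).1 this
    have hx : f (K a) = ∑ j, K a j • f (fun l => if j = l then 1 else 0) :=
      LinearMap.pi_apply_eq_sum_univ f (K a)
    simp only [Matrix.mulVec, dotProduct, Pi.zero_apply]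
    rw [hx] at hfr
    simpa [smul_eq_mul] using hfr

/-- Over a field `k` and for `n ≥ 1`, every proper left ideal `J` of the
matrix ring `M_n(k)` makes every left `M_n(k)`-module `J`-vanishingly generated: the
`M_n(k)`-span of the `J`-vanishing subset is the whole module. -/
theorem stmt_19 {k : Type*} [Field k] (n : ℕ) (hn : 1 ≤ n)
    (J : Submodule (Matrix (Fin n) (Fin n) k) (Matrix (Fin n) (Fin n) k))
    (hJ : J ≠ ⊤)
    (M : Type*) [AddCommGroup M] [Module (Matrix (Fin n) (Fin n) k) M] :
    Submodule.span (Matrix (Fin n) (Fin n) k) {m : M | ∀ K ∈ J, K • m = 0} = ⊤ := by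
  classical
  obtain ⟨w, hw0, hwK⟩ := exists_vec_of_ne_top J hJ
  obtain ⟨i0, hi0⟩ : ∃ i0, w i0 ≠ 0 := by
    by_contra h
    push_neg at h
    exact hw0 (funext h)
  -- P i : matrix whose i-th column is w
  set P : Fin n → Matrix (Fin n) (Fin n) k :=
    fun i => Matrix.of (fun a j => if j = i then w a else 0) with hP
  have hKP : ∀ i, ∀ K ∈ J, K * P i = 0 := by
    intro i K hK
    ext a j
    rw [Matrix.mul_apply]
    by_cases h : j = i
    · subst h
      have := congrFun (hwK K hK) a
      simpa [Matrix.mulVec, dotProduct, hP] using this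
    · simp [hP, h]
  -- B i : coefficient matrices with ∑ i, B i * P i = 1
  set B : Fin n → Matrix (Fin n) (Fin n) k :=
    fun i => Matrix.of (fun a l => if a = i ∧ l = i0 then (w i0)⁻¹ else 0) with hB
  have hBP : ∑ i, B i * P i = 1 := by
    ext a j
    rw [Matrix.sum_apply]
    have hterm : ∀ i, (B i * P i) a j
        = if a = i ∧ j = i then (1:k) else 0 := by
      intro i
      rw [Matrix.mul_apply]
      by_cases ha : a = i
      · by_cases hj : j = i
        · simp [hB, hP, ha, hj, ite_and, Finset.sum_ite_eq, Finset.sum_ite_eq',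
            inv_mul_cancel₀ hi0]
        · simp [hB, hP, ha, hj, ite_and]
      · simp [hB, hP, ha, ite_and]
    simp only [hterm]
    by_cases h : a = j
    · subst h
      simp [Matrix.one_apply]
    · simp [Matrix.one_apply, h, fun i => show ¬(a = i ∧ j = i) from fun ⟨h1, h2⟩ => h (h1.trans h2.symm)]
  rw [Submodule.eq_top_iff']
  intro m
  have hmem : ∀ i, P i • m ∈ {m : M | ∀ K ∈ J, K • m = 0} := by
    intro i K hK
    rw [← mul_smul, hKP i K hK, zero_smul]
  have hsum : ∑ i, B i • (P i • m) = m := by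
    have h1 : ∀ i, B i • (P i • m) = (B i * P i) • m := fun i => (mul_smul _ _ _).symm
    simp only [h1, ← Finset.sum_smul, hBP, one_smul]
  rw [← hsum]
  exact Submodule.sum_mem _ fun i _ =>
    Submodule.smul_mem _ _ (Submodule.subset_span (hmem i))
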